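/- arXiv:2203.02829 — 2 statements merged into one kernel-verified Lean document; each statement's English description precedes it below -/
import Mathlib

section
/- Let H(x,y) = y²/2 + x²/2 − x⁴/4 (the truncated pendulum Hamiltonian). Then x⁴ y dx = (8/7·x² − 4/7·H)·y dx − (6/7)·x y dH + d((2/7)·x y³) as polynomial 1-forms on ℝ². -/
/-- partial derivative in the first variable -/
noncomputable def pdx (F : ℝ → ℝ → ℝ) (x y : ℝ) : ℝ := deriv (fun t => F t y) x

/-- partial derivative in the second variable -/
noncomputable def pdy (F : ℝ → ℝ → ℝ) (x y : ℝ) : ℝ := deriv (fun t => F x t) y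

/-- truncated pendulum Hamiltonian -/
noncomputable def H (x y : ℝ) : ℝ := y^2/2 + x^2/2 - x^4/4

/-- (ii2):  x⁴y dx = (8/7·x² − 4/7·H)·y dx − (6/7)·xy·dH + d((2/7)·xy³) -/
theorem decomposition_ii2 : ∀ x y : ℝ,
    x^4 * y = (8/7 * x^2 - 4/7 * H x y) * y - 6/7 * (x*y) * pdx H x y
      + pdx (fun x y => 2/7 * x * y^3) x y
  ∧ (0 : ℝ) = - (6/7) * (x*y) * pdy H x y + pdy (fun x y => 2/7 * x * y^3) x y := by
  intro x y
  have hx : pdx H x y = x - x^3 := by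
    unfold pdx H
    have d1 : DifferentiableAt ℝ (fun t : ℝ => y^2/2 + t^2/2) x :=
      (differentiableAt_const _).add ((differentiableAt_pow 2).div_const 2)
    have d2 : DifferentiableAt ℝ (fun t : ℝ => t^4/4) x :=
      (differentiableAt_pow 4).div_const 4
    rw [deriv_fun_sub d1 d2, deriv_const_add, deriv_div_const, deriv_div_const,
      deriv_pow_field, deriv_pow_field]
    ring
  have hy : pdy H x y = y := by
    unfold pdy H
    have d1 : DifferentiableAt ℝ (fun t : ℝ => t^2/2 + x^2/2) y :=
      ((differentiableAt_pow 2).div_const 2).add (differentiableAt_const _)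
    rw [show (fun t : ℝ => t^2/2 + x^2/2 - x^4/4) = fun t => (t^2/2 + x^2/2) - x^4/4 from rfl,
      deriv_fun_sub d1 (differentiableAt_const _), deriv_const, deriv_add_const,
      deriv_div_const, deriv_pow_field]
    ring
  have h3 : pdx (fun x y => 2/7 * x * y^3) x y = 2/7 * y^3 := by
    unfold pdx
    simp only [mul_assoc]
    rw [deriv_const_mul _ (differentiableAt_fun_id.mul (differentiableAt_const _))]
    simp [deriv_mul]
  have h4 : pdy (fun x y => 2/7 * x * y^3) x y = 6/7 * x * y^2 := by
    unfold pdy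
    rw [show (fun t : ℝ => 2/7 * x * t^3) = fun t => (2/7*x) * t^3 from rfl,
      deriv_const_mul _ (differentiableAt_pow 3)]
    simp
    ring
  rw [hx, hy, h3, h4]
  unfold H
  constructor <;> ring
end

section
/- Let H(x,y) = y²/2 + x²/2 − x⁴/4. Then (−3xy)·(−3xy·dH + d(xy³)) = (8x²y² − 4H·x² + x² + y²)·dH + dR for some polynomial R(x,y), where H is substituted by its polynomial expression. -/
/-- evaluation at (x,y) of the partial derivative ∂R/∂x of a real polynomial R(x,y) -/
noncomputable def Rx (R : MvPolynomial (Fin 2) ℝ) (x y : ℝ) : ℝ :=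
  MvPolynomial.eval ![x, y] (MvPolynomial.pderiv 0 R)

/-- evaluation at (x,y) of the partial derivative ∂R/∂y of a real polynomial R(x,y) -/
noncomputable def Ry (R : MvPolynomial (Fin 2) ℝ) (x y : ℝ) : ℝ :=
  MvPolynomial.eval ![x, y] (MvPolynomial.pderiv 1 R)

open MvPolynomial in
noncomputable def Rpoly : MvPolynomial (Fin 2) ℝ :=
  C (-(3/2 : ℝ)) * X 0 ^ 2 * X 1 ^ 4 + X 0 ^ 4 * X 1 ^ 2
    + C (-(1/2 : ℝ)) * X 0 ^ 6 * X 1 ^ 2 + C (-(1/2 : ℝ)) * X 0 ^ 2 * X 1 ^ 2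
    + C (-(1/4 : ℝ)) * X 1 ^ 4 + C (-(3/8 : ℝ)) * X 0 ^ 8 + C (1/10 : ℝ) * X 0 ^ 10
    + C (-(1/4 : ℝ)) * X 0 ^ 4 + C (1/2 : ℝ) * X 0 ^ 6

lemma pdxH (x y : ℝ) : pdx H x y = x - x^3 := by
  have : (fun t : ℝ => H t y) = fun t => y^2/2 + t^2/2 - t^4/4 := by
    funext t; simp [H]
  simp only [pdx, this]
  have h : HasDerivAt (fun t : ℝ => y^2/2 + t^2/2 - t^4/4) (x - x^3) x := by
    have h1 : HasDerivAt (fun t : ℝ => t^2) (2*x^(2-1)) x := hasDerivAt_pow 2 x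
    have h2 : HasDerivAt (fun t : ℝ => t^4) (4*x^(4-1)) x := hasDerivAt_pow 4 x
    have := ((h1.div_const 2).const_add (y^2/2)).sub (h2.div_const 4)
    exact this.congr_deriv (by ring)
  exact h.deriv

lemma pdyH (x y : ℝ) : pdy H x y = y := by
  have : (fun t : ℝ => H x t) = fun t => t^2/2 + x^2/2 - x^4/4 := by
    funext t; simp [H]
  simp only [pdy, this]
  have h : HasDerivAt (fun t : ℝ => t^2/2 + x^2/2 - x^4/4) y y := by
    have h1 : HasDerivAt (fun t : ℝ => t^2) (2*y^(2-1)) y := hasDerivAt_pow 2 y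
    have := (h1.div_const 2).add_const (x^2/2 - x^4/4)
    have h2 : HasDerivAt (fun t : ℝ => t^2/2 + (x^2/2 - x^4/4)) y y := by
      exact this.congr_deriv (by ring)
    have : (fun t : ℝ => t^2/2 + x^2/2 - x^4/4) = fun t => t^2/2 + (x^2/2 - x^4/4) := by
      funext t; ring
    rw [this]; exact h2
  exact h.deriv

lemma pdxG (x y : ℝ) : pdx (fun x y => x * y^3) x y = y^3 := by
  simp only [pdx]
  have : HasDerivAt (fun t : ℝ => t * y^3) (y^3) x := by
    simpa using (hasDerivAt_id x).mul_const (y^3)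
  exact this.deriv

lemma pdyG (x y : ℝ) : pdy (fun x y => x * y^3) x y = 3 * x * y^2 := by
  simp only [pdy]
  have h1 : HasDerivAt (fun t : ℝ => t^3) (3*y^(3-1)) y := hasDerivAt_pow 3 y
  have : HasDerivAt (fun t : ℝ => x * t^3) (x * (3*y^2)) y := by
    simpa using h1.const_mul x
  rw [this.deriv]; ring

lemma RxR (x y : ℝ) : Rx Rpoly x y
    = 4*x^3*y^2 - 3*x^5*y^2 - 3*x*y^4 - x*y^2 - 3*x^7 + x^9 - x^3 + 3*x^5 := by
  simp [Rx, Rpoly, MvPolynomial.pderiv_X, Derivation.leibniz, Derivation.leibniz_pow,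
    MvPolynomial.pderiv_C, Matrix.cons_val_zero, Matrix.cons_val_one]
  ring

lemma RyR (x y : ℝ) : Ry Rpoly x y
    = -6*x^2*y^3 + 2*x^4*y - x^6*y - x^2*y - y^3 := by
  simp [Ry, Rpoly, MvPolynomial.pderiv_X, Derivation.leibniz, Derivation.leibniz_pow,
    MvPolynomial.pderiv_C, Matrix.cons_val_zero, Matrix.cons_val_one]
  ring

/-- Lemma 2(a), truncated pendulum: (−3xy)·(−3xy·dH + d(xy³)) = (8x²y² − 4Hx² + x² + y²)·dH + dR -/
theorem rel_exact : ∃ R : MvPolynomial (Fin 2) ℝ, ∀ x y : ℝ,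
    (-3*x*y) * ((-3*x*y) * pdx H x y + pdx (fun x y => x * y^3) x y)
      = (8*x^2*y^2 - 4 * H x y * x^2 + x^2 + y^2) * pdx H x y + Rx R x y
  ∧ (-3*x*y) * ((-3*x*y) * pdy H x y + pdy (fun x y => x * y^3) x y)
      = (8*x^2*y^2 - 4 * H x y * x^2 + x^2 + y^2) * pdy H x y + Ry R x y := by
  refine ⟨Rpoly, fun x y => ⟨?_, ?_⟩⟩
  · rw [pdxH, pdxG, RxR]; simp only [H]; ring
  · rw [pdyH, pdyG, RyR]; simp only [H]; ring
end
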